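/- (Theorem 2.4, third identity, q-case.) Let n ≥ 1 be a natural number, β₁, β₂ ∈ (0,1) and m₁ ∈ ℕ. Then the double series over all pairs (v₁,v₂) ∈ ℕ × ℕ of [v₁]_{m₁,q} · ( ∏_{i=1}^{m₁} (1 − β₁·q^{n+v₂+i−1}) ) · v(v₁,v₂) converges, with sum equal to [n+m₁−1]_{m₁,q} · β₁^{m₁} / ∏_{i=1}^{m₁} (1 − β₂·q^{n+i−1}). -/

import Mathlib

open Finset

/-- q-integer `[k]_q = (1 - q^k)/(1 - q)`. -/
noncomputable def qInt (q : ℝ) (k : ℤ) : ℝ := (1 - q ^ k) / (1 - q)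

/-- q-factorial `[n]_q! = ∏_{i=1}^n [i]_q`. -/
noncomputable def qFact (q : ℝ) (n : ℕ) : ℝ := ∏ i ∈ Finset.Icc 1 n, qInt q (i : ℤ)

/-- q-binomial coefficient `C_q(n,k)`. -/
noncomputable def qBinom (q : ℝ) (n k : ℕ) : ℝ := qFact q n / (qFact q k * qFact q (n - k))

/-- q-falling factorial `[u]_{m,q} = ∏_{i=1}^m [u-i+1]_q`. -/
noncomputable def qFall (q : ℝ) (u : ℤ) (m : ℕ) : ℝ := ∏ i ∈ Finset.Icc 1 m, qInt q (u - (i : ℤ) + 1)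

/-- `[k]_{q⁻¹} = q^{1-k} · [k]_q`. -/
noncomputable def qIntInv (q : ℝ) (k : ℤ) : ℝ := q ^ (1 - k) * qInt q k

/-- `[u]_{m,q⁻¹} = ∏_{i=1}^m [u-i+1]_{q⁻¹}`. -/
noncomputable def qFallInv (q : ℝ) (u : ℤ) (m : ℕ) : ℝ := ∏ i ∈ Finset.Icc 1 m, qIntInv q (u - (i : ℤ) + 1)

/-- `b(k) = k(k-1)/2`. -/
def bb (k : ℕ) : ℕ := k * (k - 1) / 2

/-- `⟨1 ⊕ α⟩_m = ∏_{i=1}^m (1 + α q^{i-1})`. -/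
noncomputable def oplus (q α : ℝ) (m : ℕ) : ℝ := ∏ i ∈ Finset.Icc 1 m, (1 + α * q ^ (i - 1))

/-- `⟨1 ⊖ β⟩_m = ∏_{i=1}^m (1 - β q^{i-1})`. -/
noncomputable def ominus (q β : ℝ) (m : ℕ) : ℝ := ∏ i ∈ Finset.Icc 1 m, (1 - β * q ^ (i - 1))

/-- q-trinomial coefficient `T_q(n; x₁, x₂)`. -/
noncomputable def qTri (q : ℝ) (n x1 x2 : ℕ) : ℝ :=
  qFact q n / (qFact q x1 * qFact q x2 * qFact q (n - x1 - x2))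

/-- pmf of the negative q-trinomial distribution of the second kind. -/
noncomputable def vpmf (q b1 b2 : ℝ) (n v1 v2 : ℕ) : ℝ :=
  (qFact q (n + v1 + v2 - 1) / (qFact q v1 * qFact q v2 * qFact q (n - 1))) *
    b1 ^ v1 * b2 ^ v2 * ominus q b1 (n + v2) * ominus q b2 n

section aux
variable {q : ℝ} (hq0 : 0 < q) (hq1 : q < 1)

lemma qInt_natCast (k : ℕ) : qInt q (k : ℤ) = (1 - q ^ k) / (1 - q) := by
  simp [qInt, zpow_natCast]

include hq0 hq1 in
lemma qInt_pos {k : ℕ} (hk : 1 ≤ k) : 0 < qInt q (k : ℤ) := by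
  rw [qInt_natCast]
  have h1 : q ^ k < 1 := pow_lt_one₀ hq0.le hq1 (by omega)
  exact div_pos (by linarith) (by linarith)

include hq1 in
lemma qInt_add (a b : ℕ) :
    qInt q ((a + b : ℕ) : ℤ) = qInt q (a : ℤ) + q ^ a * qInt q (b : ℤ) := by
  rw [qInt_natCast, qInt_natCast, qInt_natCast, pow_add]
  have : (1:ℝ) - q ≠ 0 := by linarith
  field_simp
  ring

include hq0 hq1 in
lemma qFact_pos (n : ℕ) : 0 < qFact q n :=
  Finset.prod_pos fun i hi => qInt_pos hq0 hq1 (mem_Icc.mp hi).1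

include hq0 hq1 in
lemma qFact_ne_zero (n : ℕ) : qFact q n ≠ 0 := (qFact_pos hq0 hq1 n).ne'

lemma qFact_succ (n : ℕ) : qFact q (n + 1) = qFact q n * qInt q ((n + 1 : ℕ) : ℤ) := by
  rw [qFact, Finset.prod_Icc_succ_top (by omega)]; rfl

include hq0 hq1 in
lemma qBinom_pos (n k : ℕ) : 0 < qBinom q n k :=
  div_pos (qFact_pos hq0 hq1 _) (mul_pos (qFact_pos hq0 hq1 _) (qFact_pos hq0 hq1 _))

include hq0 hq1 in
lemma qBinom_zero_right (n : ℕ) : qBinom q n 0 = 1 := by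
  have h0 : qFact q 0 = 1 := by simp [qFact]
  rw [qBinom, h0, Nat.sub_zero, one_mul, div_self (qFact_ne_zero hq0 hq1 n)]

include hq0 hq1 in
lemma qBinom_pascal {a k : ℕ} (h : k + 1 ≤ a) :
    qBinom q (a + 1) (k + 1) = qBinom q a (k + 1) + q ^ (a - k) * qBinom q a k := by
  obtain ⟨d, hd1, rfl⟩ : ∃ d, 1 ≤ d ∧ a = k + d := ⟨a - k, by omega, by omega⟩
  obtain ⟨e, rfl⟩ : ∃ e, d = e + 1 := ⟨d - 1, by omega⟩
  have key : qInt q ((k + (e + 1) + 1 : ℕ) : ℤ)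
      = qInt q ((e + 1 : ℕ) : ℤ) + q ^ (e + 1) * qInt q ((k + 1 : ℕ) : ℤ) := by
    have := qInt_add (q := q) hq1 (e + 1) (k + 1)
    rw [show (e + 1) + (k + 1) = k + (e+1) + 1 by ring] at this
    exact this
  have h1 : (k + (e + 1) + 1) - (k + 1) = e + 1 := by omega
  have h2 : (k + (e + 1)) - (k + 1) = e := by omega
  have h3 : (k + (e + 1)) - k = e + 1 := by omega
  have hik : qInt q ((k + 1 : ℕ) : ℤ) ≠ 0 := (qInt_pos hq0 hq1 (by omega)).ne'
  have hie : qInt q ((e + 1 : ℕ) : ℤ) ≠ 0 := (qInt_pos hq0 hq1 (by omega)).ne'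
  rw [qBinom, qBinom, qBinom, h1, h2, h3,
    show k + (e + 1) + 1 = (k + (e+1)) + 1 from rfl, qFact_succ, qFact_succ, qFact_succ, key]
  have hf1 := qFact_ne_zero hq0 hq1 (k + (e+1))
  have hf2 := qFact_ne_zero hq0 hq1 k
  have hf3 := qFact_ne_zero hq0 hq1 e
  set A := qFact q (k + (e+1))
  set B := qFact q k
  set C := qFact q e
  set ik := qInt q ((k + 1 : ℕ) : ℤ)
  set ie := qInt q ((e + 1 : ℕ) : ℤ)
  field_simp

include hq0 hq1 in
lemma sum_qBinom {N : ℕ} (hN : 1 ≤ N) (w : ℕ) :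
    ∑ j ∈ Finset.range (w + 1), q ^ (N * j) * qBinom q (N - 1 + (w - j)) (w - j)
      = qBinom q (N + w) w := by
  induction w with
  | zero => simp [qBinom_zero_right hq0 hq1]
  | succ w ih =>
    rw [Finset.sum_range_succ']
    have h0 : q ^ (N * 0) * qBinom q (N - 1 + (w + 1 - 0)) (w + 1 - 0)
        = qBinom q (N + w) (w + 1) := by
      rw [show N - 1 + (w + 1 - 0) = N + w by omega]; simp
    have hterm : ∀ j ∈ Finset.range (w + 1),
        q ^ (N * (j + 1)) * qBinom q (N - 1 + (w + 1 - (j + 1))) (w + 1 - (j + 1))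
        = q ^ N * (q ^ (N * j) * qBinom q (N - 1 + (w - j)) (w - j)) := by
      intro j hj
      rw [show N * (j+1) = N + N * j by ring, pow_add,
        show w + 1 - (j + 1) = w - j by omega]
      ring
    rw [Finset.sum_congr rfl hterm, ← Finset.mul_sum, ih, h0,
      show N + (w + 1) = (N + w) + 1 by ring,
      qBinom_pascal hq0 hq1 (by omega), show N + w - w = N by omega]
    ring
end aux

section aux2
variable {q : ℝ} (hq0 : 0 < q) (hq1 : q < 1)

lemma ominus_succ (x : ℝ) (N : ℕ) :
    ominus q x (N + 1) = ominus q x N * (1 - x * q ^ N) := by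
  rw [ominus, Finset.prod_Icc_succ_top (by omega), Nat.add_sub_cancel]; rfl

include hq0 hq1 in
lemma ominus_pos {x : ℝ} (hx0 : 0 ≤ x) (hx1 : x < 1) (m : ℕ) : 0 < ominus q x m := by
  refine Finset.prod_pos fun i _ => ?_
  have h1 : q ^ (i - 1) ≤ 1 := pow_le_one₀ hq0.le hq1.le
  nlinarith

lemma ominus_add (x : ℝ) (a m : ℕ) :
    ominus q x (a + m) = ominus q x a * ∏ i ∈ Finset.Icc 1 m, (1 - x * q ^ (a + i - 1)) := by
  induction m with
  | zero => simp
  | succ m ih =>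
    rw [show a + (m+1) = (a + m) + 1 from rfl, ominus_succ, ih,
      Finset.prod_Icc_succ_top (show 1 ≤ m + 1 by omega),
      show a + (m + 1) - 1 = a + m by omega]
    ring

include hq0 hq1 in
lemma hasSum_qbinom_series {x : ℝ} (hx0 : 0 ≤ x) (hx1 : x < 1) :
    ∀ N, 1 ≤ N → HasSum (fun w => qBinom q (N - 1 + w) w * x ^ w) (1 / ominus q x N) := by
  refine Nat.le_induction ?_ ?_
  ·
    have h1 : ∀ w : ℕ, qBinom q (1 - 1 + w) w * x ^ w = x ^ w := by
      intro w
      have : qBinom q w w = 1 := by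
        rw [qBinom, Nat.sub_self, show qFact q 0 = 1 by simp [qFact], mul_one,
          div_self (qFact_ne_zero hq0 hq1 w)]
      simp [this]
    have h2 : ominus q x 1 = 1 - x := by simp [ominus]
    rw [h2, one_div]
    exact HasSum.congr_fun (hasSum_geometric_of_lt_one hx0 hx1) fun w => h1 w
  · intro N hN ih
    have hxq0 : 0 ≤ x * q ^ N := by positivity
    have hxq1 : x * q ^ N < 1 := by
      have : q ^ N ≤ 1 := pow_le_one₀ hq0.le hq1.le
      nlinarith
    have hg : HasSum (fun j => (x * q ^ N) ^ j) (1 - x * q ^ N)⁻¹ :=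
      hasSum_geometric_of_lt_one hxq0 hxq1
    have hfn : Summable fun w => ‖qBinom q (N - 1 + w) w * x ^ w‖ :=
      ih.summable.congr fun w => (Real.norm_of_nonneg
        (mul_nonneg (qBinom_pos hq0 hq1 _ _).le (pow_nonneg hx0 w))).symm
    have hgn : Summable fun j => ‖(x * q ^ N) ^ j‖ :=
      hg.summable.congr fun j => (Real.norm_of_nonneg (pow_nonneg hxq0 j)).symm
    have H := hasSum_sum_range_mul_of_summable_norm hfn hgn
    rw [ih.tsum_eq, hg.tsum_eq] at H
    have hval : 1 / ominus q x N * (1 - x * q ^ N)⁻¹ = 1 / ominus q x (N + 1) := by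
      rw [ominus_succ]
      field_simp
    rw [hval] at H
    refine H.congr_fun fun w => ?_
    have hterm : ∀ k ∈ Finset.range (w + 1),
        qBinom q (N - 1 + k) k * x ^ k * (x * q ^ N) ^ (w - k)
        = x ^ w * (q ^ (N * (w - k)) * qBinom q (N - 1 + k) k) := by
      intro k hk
      have hkw : k ≤ w := Nat.lt_succ_iff.mp (Finset.mem_range.mp hk)
      rw [mul_pow, ← pow_mul, ← mul_assoc]
      rw [mul_comm (qBinom q (N - 1 + k) k) (x ^ k), mul_assoc (x ^ k), mul_comm _ (x ^ (w-k))]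
      rw [show x ^ k * (x ^ (w - k) * qBinom q (N - 1 + k) k) = (x ^ k * x ^ (w-k)) * qBinom q (N - 1 + k) k by ring,
        ← pow_add, show k + (w - k) = w by omega]
      ring
    rw [Finset.sum_congr rfl hterm, ← Finset.mul_sum]
    have hre : ∑ k ∈ Finset.range (w + 1), q ^ (N * (w - k)) * qBinom q (N - 1 + k) k
        = ∑ j ∈ Finset.range (w + 1), q ^ (N * j) * qBinom q (N - 1 + (w - j)) (w - j) := by
      rw [← Finset.sum_range_reflect]
      refine Finset.sum_congr rfl fun j hj => ?_
      have hj' : j ≤ w := by simpa using Nat.lt_succ_iff.mp (Finset.mem_range.mp hj)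
      rw [show w + 1 - 1 - j = w - j by omega, show w - (w - j) = j by omega]
    rw [hre, sum_qBinom hq0 hq1 hN w, show N + 1 - 1 + w = N + w by omega]
    ring
end aux2

section aux3
variable {q : ℝ} (hq0 : 0 < q) (hq1 : q < 1)

lemma prod_Icc_one_eq_range (f : ℕ → ℝ) (m : ℕ) :
    ∏ i ∈ Finset.Icc 1 m, f i = ∏ j ∈ Finset.range m, f (1 + j) := by
  rw [← Finset.Ico_add_one_right_eq_Icc, Finset.prod_Ico_eq_prod_range]
  simp

lemma qFact_add (w m : ℕ) :
    qFact q (w + m) = qFact q w * ∏ j ∈ Finset.range m, qInt q ((w + j + 1 : ℕ) : ℤ) := by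
  induction m with
  | zero => simp
  | succ m ih =>
    rw [show w + (m + 1) = (w + m) + 1 from rfl, qFact_succ, ih, Finset.prod_range_succ,
      show w + m + 1 = w + m + 1 from rfl]
    ring

lemma qFall_nat (w m : ℕ) :
    qFall q ((w + m : ℕ) : ℤ) m = ∏ j ∈ Finset.range m, qInt q ((w + j + 1 : ℕ) : ℤ) := by
  rw [qFall, prod_Icc_one_eq_range, ← Finset.prod_range_reflect]
  refine Finset.prod_congr rfl fun j hj => ?_
  have hj' : j < m := Finset.mem_range.mp hj
  congr 1
  push_cast
  omega

lemma qFall_eq_zero {v m : ℕ} (h : v < m) : qFall q (v : ℤ) m = 0 := by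
  apply Finset.prod_eq_zero (i := v + 1) (Finset.mem_Icc.mpr ⟨by omega, by omega⟩)
  rw [show (v : ℤ) - ((v + 1 : ℕ) : ℤ) + 1 = 0 by push_cast; ring]
  simp [qInt]

include hq0 hq1 in
lemma qFall_nonneg (v m : ℕ) : 0 ≤ qFall q (v : ℤ) m := by
  rcases lt_or_ge v m with h | h
  · rw [qFall_eq_zero h]
  · refine Finset.prod_nonneg fun i hi => ?_
    have hi' := Finset.mem_Icc.mp hi
    rw [show (v : ℤ) - (i : ℤ) + 1 = ((v - i + 1 : ℕ) : ℤ) by push_cast [Nat.cast_sub (by omega : i ≤ v)]; ring]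
    exact (qInt_pos hq0 hq1 (by omega)).le
end aux3


theorem stmt17 (q : ℝ) (hq0 : 0 < q) (hq1 : q < 1) (n : ℕ) (hn : 1 ≤ n) (β1 β2 : ℝ)
    (hβ1 : 0 < β1) (hβ1' : β1 < 1) (hβ2 : 0 < β2) (hβ2' : β2 < 1) (m1 : ℕ) :
    HasSum (fun v : ℕ × ℕ =>
        qFall q (v.1 : ℤ) m1 * (∏ i ∈ Finset.Icc 1 m1, (1 - β1 * q ^ (n + v.2 + i - 1)))
          * vpmf q β1 β2 n v.1 v.2)
      (qFall q ((n : ℤ) + (m1 : ℤ) - 1) m1 * β1 ^ m1 /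
        ∏ i ∈ Finset.Icc 1 m1, (1 - β2 * q ^ (n + i - 1))) := by
  set T : ℕ × ℕ → ℝ := fun v =>
    qFall q (v.1 : ℤ) m1 * (∏ i ∈ Finset.Icc 1 m1, (1 - β1 * q ^ (n + v.2 + i - 1)))
      * vpmf q β1 β2 n v.1 v.2 with hT
  set D : ℝ := (qFact q (n + m1 - 1) / qFact q (n - 1)) * β1 ^ m1 * ominus q β2 n with hD
  set C : ℕ → ℝ := fun v2 =>
    (qFact q (n + m1 + v2 - 1) / (qFact q v2 * qFact q (n - 1))) * β1 ^ m1 * β2 ^ v2 *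
      ominus q β2 n with hC
  set S : ℝ := qFall q ((n : ℤ) + (m1 : ℤ) - 1) m1 * β1 ^ m1 /
        ∏ i ∈ Finset.Icc 1 m1, (1 - β2 * q ^ (n + i - 1)) with hS
  -- fiberwise sums over v1
  have hfib : ∀ v2, HasSum (fun v1 => T (v1, v2)) (C v2) := by
    intro v2
    have hN : 1 ≤ n + m1 + v2 := by omega
    have hser := (hasSum_qbinom_series hq0 hq1 hβ1.le hβ1' (n + m1 + v2) hN).mul_right
      (C v2 * ominus q β1 (n + m1 + v2))
    have homi := (ominus_pos hq0 hq1 hβ1.le hβ1' (n + m1 + v2)).ne'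
    have hval : 1 / ominus q β1 (n + m1 + v2) * (C v2 * ominus q β1 (n + m1 + v2)) = C v2 := by
      field_simp
    rw [hval] at hser
    have hshift : ∀ w : ℕ, T (w + m1, v2)
        = qBinom q (n + m1 + v2 - 1 + w) w * β1 ^ w * (C v2 * ominus q β1 (n + m1 + v2)) := by
      intro w
      have e1 := qFall_nat (q := q) w m1
      have e2 := qFact_add (q := q) w m1
      have e3 : ominus q β1 (n + v2) * (∏ i ∈ Finset.Icc 1 m1, (1 - β1 * q ^ (n + v2 + i - 1)))
          = ominus q β1 (n + m1 + v2) := by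
        rw [← ominus_add]
        congr 1
        omega
      simp only [hT, hC, vpmf, qBinom]
      rw [show n + (w + m1) + v2 - 1 = n + m1 + v2 - 1 + w by omega,
        show n + m1 + v2 - 1 + w - w = n + m1 + v2 - 1 by omega,
        e1, e2, ← e3, pow_add β1 w m1]
      have hP : (0:ℝ) < ∏ j ∈ Finset.range m1, qInt q ((w + j + 1 : ℕ) : ℤ) :=
        Finset.prod_pos fun j _ => qInt_pos hq0 hq1 (by omega)
      have h1 := qFact_ne_zero hq0 hq1 w
      have h2 := qFact_ne_zero hq0 hq1 v2
      have h3 := qFact_ne_zero hq0 hq1 (n - 1)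
      have h4 := qFact_ne_zero hq0 hq1 (n + m1 + v2 - 1)
      have h5 := hP.ne'
      field_simp
    have hser' : HasSum (fun w => T (w + m1, v2)) (C v2) :=
      hser.congr_fun fun w => hshift w
    have h0 : ∑ i ∈ Finset.range m1, T (i, v2) = 0 := by
      refine Finset.sum_eq_zero fun i hi => ?_
      simp only [hT]
      rw [qFall_eq_zero (Finset.mem_range.mp hi), zero_mul, zero_mul]
    have := (hasSum_nat_add_iff (f := fun v1 => T (v1, v2)) m1).mp hser'
    rwa [h0, add_zero] at this
  -- outer sum over v2
  have houter : HasSum C S := by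
    have hN : 1 ≤ n + m1 := by omega
    have hser := (hasSum_qbinom_series hq0 hq1 hβ2.le hβ2' (n + m1) hN).mul_right D
    have hterm : ∀ v2, C v2 = qBinom q (n + m1 - 1 + v2) v2 * β2 ^ v2 * D := by
      intro v2
      simp only [hC, hD, qBinom]
      rw [show n + m1 - 1 + v2 - v2 = n + m1 - 1 by omega,
        show n + m1 + v2 - 1 = n + m1 - 1 + v2 by omega]
      have h1 := qFact_ne_zero hq0 hq1 v2
      have h2 := qFact_ne_zero hq0 hq1 (n - 1)
      have h3 := qFact_ne_zero hq0 hq1 (n + m1 - 1)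
      field_simp
    have hval : 1 / ominus q β2 (n + m1) * D = S := by
      have hsplit : ominus q β2 (n + m1)
          = ominus q β2 n * ∏ i ∈ Finset.Icc 1 m1, (1 - β2 * q ^ (n + i - 1)) :=
        ominus_add β2 n m1
      have hfall : qFall q ((n : ℤ) + (m1 : ℤ) - 1) m1
          = qFact q (n + m1 - 1) / qFact q (n - 1) := by
        have hcast : (n : ℤ) + (m1 : ℤ) - 1 = (((n - 1) + m1 : ℕ) : ℤ) := by
          push_cast [Nat.cast_sub hn]; ring
        rw [hcast, qFall_nat, show n + m1 - 1 = (n - 1) + m1 by omega, qFact_add (n-1) m1]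
        rw [mul_comm (qFact q (n - 1)) _, mul_div_assoc, div_self (qFact_ne_zero hq0 hq1 (n-1)), mul_one]
      have hP2 : (0:ℝ) < ∏ i ∈ Finset.Icc 1 m1, (1 - β2 * q ^ (n + i - 1)) := by
        have := ominus_pos hq0 hq1 hβ2.le hβ2' (n + m1)
        have h2 := ominus_pos hq0 hq1 hβ2.le hβ2' n
        nlinarith [hsplit]
      have hom2 := (ominus_pos hq0 hq1 hβ2.le hβ2' n).ne'
      have hP2' := hP2.ne'
      have hE := qFact_ne_zero hq0 hq1 (n - 1)
      rw [hS, hD, hfall, hsplit]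
      field_simp
    rw [← hval]
    exact hser.congr_fun fun v2 => hterm v2
  -- nonnegativity
  have hT0 : ∀ p : ℕ × ℕ, 0 ≤ T p := by
    rintro ⟨v1, v2⟩
    have hP1 : (0:ℝ) ≤ ∏ i ∈ Finset.Icc 1 m1, (1 - β1 * q ^ (n + v2 + i - 1)) := by
      refine Finset.prod_nonneg fun i _ => ?_
      have : q ^ (n + v2 + i - 1) ≤ 1 := pow_le_one₀ hq0.le hq1.le
      nlinarith
    have hv : 0 ≤ vpmf q β1 β2 n v1 v2 := by
      rw [vpmf]
      have o1 := (ominus_pos hq0 hq1 hβ1.le hβ1' (n + v2)).le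
      have o2 := (ominus_pos hq0 hq1 hβ2.le hβ2' n).le
      have f1 := (qFact_pos hq0 hq1 (n + v1 + v2 - 1)).le
      have f2 := (qFact_pos hq0 hq1 v1).le
      have f3 := (qFact_pos hq0 hq1 v2).le
      have f4 := (qFact_pos hq0 hq1 (n - 1)).le
      positivity
    exact mul_nonneg (mul_nonneg (qFall_nonneg hq0 hq1 v1 m1) hP1) hv
  -- assemble the double sum
  have hg0 : (0 : ℕ × ℕ → ℝ) ≤ fun p : ℕ × ℕ => T (p.2, p.1) := fun p => hT0 (p.2, p.1)
  have hsum_g : Summable (fun p : ℕ × ℕ => T (p.2, p.1)) := by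
    refine (summable_prod_of_nonneg hg0).mpr ⟨fun v2 => (hfib v2).summable, ?_⟩
    exact houter.summable.congr fun v2 => ((hfib v2).tsum_eq).symm
  have hgsum : HasSum (fun p : ℕ × ℕ => T (p.2, p.1)) S := by
    have ht := hsum_g.hasSum
    have heq : ∑' p : ℕ × ℕ, T (p.2, p.1) = S := by
      rw [Summable.tsum_prod' hsum_g fun v2 => (hfib v2).summable]
      rw [tsum_congr fun v2 => (hfib v2).tsum_eq]
      exact houter.tsum_eq
    rwa [heq] at ht
  exact (Equiv.hasSum_iff (Equiv.prodComm ℕ ℕ)).mp hgsum
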